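/- Let β > 0, λ > 0, and define f(s) = (e^{-sλ} + e^{-(β-s)λ})/(1 - e^{-βλ}) for s ∈ [0,β], extended β-periodically and symmetrically to ℝ. Then for any finite collections s_1,…,s_n ∈ ℝ and c_1,…,c_n ∈ ℂ, the matrix (f(|s_i - s_j|))_{i,j} is positive semi-definite, i.e., ∑_{i,j} c̄_i c_j f(|s_i - s_j|) ≥ 0. -/

import Mathlib

open Real
open MeasureTheory


namespace Stmt4Aux

noncomputable def phi (β lam x t : ℝ) : ℝ :=
  Real.exp (-(β * Int.fract ((x - t) / β)) * lam)

variable {β lam : ℝ}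

lemma fract_eq (hβ : 0 < β) {u : ℝ} (h1 : 0 ≤ u) (h2 : u < β) :
    β * Int.fract (u / β) = u := by
  rw [Int.fract_eq_self.mpr ⟨div_nonneg h1 hβ.le, (div_lt_one hβ).mpr h2⟩]
  field_simp

lemma fract_eq' (hβ : 0 < β) {u : ℝ} (h1 : -β ≤ u) (h2 : u < 0) :
    β * Int.fract (u / β) = u + β := by
  have h : Int.fract (u / β) = u / β + 1 := by
    rw [← Int.fract_add_one]
    refine Int.fract_eq_self.mpr ⟨?_, ?_⟩
    · have : (-1 : ℝ) ≤ u / β := by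
        rw [neg_le, ← neg_div]
        exact (div_le_one hβ).mpr (by linarith)
      linarith
    · have : u / β < 0 := div_neg_of_neg_of_pos h2 hβ
      linarith
  rw [h]
  field_simp

lemma phi_meas (x : ℝ) : Measurable (fun t => phi β lam x t) := by
  unfold phi
  exact Real.measurable_exp.comp
    ((((measurable_const.sub measurable_id).div_const β).fract.const_mul β).neg.mul_const lam)

lemma phi_intble (hβ : 0 < β) (hlam : 0 < lam) (x y u v : ℝ) :
    IntervalIntegrable (fun t => phi β lam x t * phi β lam y t) volume u v := by
  rw [intervalIntegrable_iff]
  apply Measure.integrableOn_of_bounded (M := 1) measure_Ioc_lt_top.ne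
    (((phi_meas x).mul (phi_meas y)).aestronglyMeasurable)
  filter_upwards with t
  have hx : phi β lam x t ≤ 1 := by
    apply Real.exp_le_one_iff.mpr
    have h0 := mul_nonneg hβ.le (Int.fract_nonneg ((x - t) / β))
    nlinarith
  have hy : phi β lam y t ≤ 1 := by
    apply Real.exp_le_one_iff.mpr
    have h0 := mul_nonneg hβ.le (Int.fract_nonneg ((y - t) / β))
    nlinarith
  have hx0 : 0 < phi β lam x t := Real.exp_pos _
  have hy0 : 0 < phi β lam y t := Real.exp_pos _
  simp only [Pi.mul_apply]; rw [Real.norm_eq_abs, abs_of_pos (mul_pos hx0 hy0)]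
  nlinarith

lemma int_exp (c d u v : ℝ) (hc : c ≠ 0) :
    ∫ t in u..v, Real.exp (c * t + d) = (Real.exp (c * v + d) - Real.exp (c * u + d)) / c := by
  have h : ∀ t : ℝ, HasDerivAt (fun t => Real.exp (c * t + d) / c) (Real.exp (c * t + d)) t := by
    intro t
    have h1 : HasDerivAt (fun t : ℝ => c * t + d) c t := by
      simpa using ((hasDerivAt_id t).const_mul c).add_const d
    have h2 := h1.exp.div_const c
    simpa [mul_div_assoc, mul_div_cancel_left₀, hc] using h2
  rw [intervalIntegral.integral_eq_sub_of_hasDerivAt (fun t _ => h t)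
    (Continuous.intervalIntegrable (by continuity) u v)]
  ring

lemma core (hβ : 0 < β) (hlam : 0 < lam) {a b : ℝ} (hb : 0 ≤ b) (hba : b ≤ a) (ha : a < β) :
    ∫ t in (0:ℝ)..β, phi β lam a t * phi β lam b t
      = (1 - Real.exp (-β * lam)) *
          (Real.exp (-(a - b) * lam) + Real.exp (-(β - (a - b)) * lam)) / (2 * lam) := by
  have ha0 : 0 ≤ a := hb.trans hba
  have hbβ : b < β := lt_of_le_of_lt hba ha
  have h2lam : (2 : ℝ) * lam ≠ 0 := by positivity
  have h1 : ∫ t in (0:ℝ)..b, phi β lam a t * phi β lam b t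
      = ∫ t in (0:ℝ)..b, Real.exp (2 * lam * t + (-((a + b) * lam))) := by
    apply intervalIntegral.integral_congr
    intro t ht
    rw [Set.uIcc_of_le hb] at ht
    obtain ⟨ht0, htb⟩ := ht
    unfold phi
    dsimp only
    rw [fract_eq hβ (by linarith) (by linarith), fract_eq hβ (by linarith) (by linarith),
      ← Real.exp_add]
    ring_nf
  have h2 : ∫ t in b..a, phi β lam a t * phi β lam b t
      = ∫ t in b..a, Real.exp (2 * lam * t + (-((a + b + β) * lam))) := by
    rw [intervalIntegral.integral_of_le hba, intervalIntegral.integral_of_le hba]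
    apply MeasureTheory.setIntegral_congr_fun measurableSet_Ioc
    intro t ht
    obtain ⟨htb, hta⟩ := ht
    unfold phi
    dsimp only
    rw [fract_eq hβ (by linarith) (by linarith), fract_eq' hβ (by linarith) (by linarith),
      ← Real.exp_add]
    ring_nf
  have h3 : ∫ t in a..β, phi β lam a t * phi β lam b t
      = ∫ t in a..β, Real.exp (2 * lam * t + (-((a + b + 2 * β) * lam))) := by
    rw [intervalIntegral.integral_of_le ha.le, intervalIntegral.integral_of_le ha.le]
    apply MeasureTheory.setIntegral_congr_fun measurableSet_Ioc
    intro t ht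
    obtain ⟨hta, htβ⟩ := ht
    unfold phi
    dsimp only
    rw [fract_eq' hβ (by linarith) (by linarith), fract_eq' hβ (by linarith) (by linarith),
      ← Real.exp_add]
    ring_nf
  have s1 : (∫ t in (0:ℝ)..b, phi β lam a t * phi β lam b t)
      + ∫ t in b..a, phi β lam a t * phi β lam b t
      = ∫ t in (0:ℝ)..a, phi β lam a t * phi β lam b t :=
    intervalIntegral.integral_add_adjacent_intervals (phi_intble hβ hlam a b 0 b)
      (phi_intble hβ hlam a b b a)
  have s2 : (∫ t in (0:ℝ)..a, phi β lam a t * phi β lam b t)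
      + ∫ t in a..β, phi β lam a t * phi β lam b t
      = ∫ t in (0:ℝ)..β, phi β lam a t * phi β lam b t :=
    intervalIntegral.integral_add_adjacent_intervals (phi_intble hβ hlam a b 0 a)
      (phi_intble hβ hlam a b a β)
  rw [← s2, ← s1, h1, h2, h3, int_exp _ _ _ _ h2lam, int_exp _ _ _ _ h2lam,
    int_exp _ _ _ _ h2lam]
  have eA : Real.exp (2 * lam * b + -((a + b) * lam)) = Real.exp (-(a - b) * lam) := by
    congr 1; ring
  have eB : Real.exp (2 * lam * a + -((a + b + β) * lam))
      = Real.exp (-(β - (a - b)) * lam) := by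
    congr 1; ring
  have eC : Real.exp (2 * lam * b + -((a + b + β) * lam))
      = Real.exp (-β * lam) * Real.exp (-(a - b) * lam) := by
    rw [← Real.exp_add]; congr 1; ring
  have eD : Real.exp (2 * lam * a + -((a + b + 2 * β) * lam))
      = Real.exp (-β * lam) * Real.exp (-(β - (a - b)) * lam) := by
    rw [← Real.exp_add]; congr 1; ring
  have eE : Real.exp (2 * lam * β + -((a + b + 2 * β) * lam))
      = Real.exp (2 * lam * 0 + -((a + b) * lam)) := by
    congr 1; ring
  rw [eA, eB, eC, eD, eE]
  field_simp
  ring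

lemma core' (hβ : 0 < β) (hlam : 0 < lam) {a b : ℝ} (ha : 0 ≤ a) (ha' : a < β)
    (hb : 0 ≤ b) (hb' : b < β) :
    ∫ t in (0:ℝ)..β, phi β lam a t * phi β lam b t
      = (1 - Real.exp (-β * lam)) *
          (Real.exp (-|a - b| * lam) + Real.exp (-(β - |a - b|) * lam)) / (2 * lam) := by
  rcases le_total b a with h | h
  · rw [abs_of_nonneg (by linarith)]
    exact core hβ hlam hb h ha'
  · rw [abs_sub_comm, abs_of_nonneg (by linarith)]
    have h0 := core hβ hlam ha h hb'
    simp_rw [mul_comm (phi β lam b _) (phi β lam a _)] at h0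
    exact h0

lemma frac_shift (hβ : 0 < β) (x t : ℝ) :
    Int.fract ((x - t) / β) = Int.fract ((β * Int.fract (x / β) - t) / β) := by
  have hf : Int.fract (x / β) = x / β - ⌊x / β⌋ := rfl
  have h : (x - t) / β = (β * Int.fract (x / β) - t) / β + (⌊x / β⌋ : ℤ) := by
    rw [hf]
    field_simp
    ring
  rw [h, Int.fract_add_intCast]

lemma reduceAux (hβ : 0 < β) {a b u : ℝ} (ha : 0 ≤ a) (ha' : a < β) (hb : 0 ≤ b) (hb' : b < β)
    (hu : Int.fract (u / β) = Int.fract ((a - b) / β)) :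
    Real.exp (-(β * Int.fract (u / β)) * lam) + Real.exp (-(β - β * Int.fract (u / β)) * lam)
      = Real.exp (-|a - b| * lam) + Real.exp (-(β - |a - b|) * lam) := by
  rcases le_or_gt b a with h | h
  · have h0 : β * Int.fract (u / β) = a - b := by
      rw [hu]; exact fract_eq hβ (by linarith) (by linarith)
    rw [h0, abs_of_nonneg (by linarith)]
  · have h0 : β * Int.fract (u / β) = a - b + β := by
      rw [hu]; exact fract_eq' hβ (by linarith) (by linarith)
    rw [h0, abs_of_neg (by linarith)]
    rw [show -(a - b + β) * lam = -(β - - (a - b)) * lam by ring,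
      show -(β - (a - b + β)) * lam = - -(a - b) * lam by ring, add_comm]

lemma kern (hβ : 0 < β) (hlam : 0 < lam) (x y : ℝ) :
    (Real.exp (-(β * Int.fract (|x - y| / β)) * lam) +
        Real.exp (-(β - β * Int.fract (|x - y| / β)) * lam)) / (1 - Real.exp (-β * lam))
      = 2 * lam / (1 - Real.exp (-β * lam)) ^ 2 *
          ∫ t in (0:ℝ)..β, phi β lam x t * phi β lam y t := by
  have hq : Real.exp (-β * lam) < 1 := Real.exp_lt_one_iff.mpr (by nlinarith)
  have hD : (0:ℝ) < 1 - Real.exp (-β * lam) := by linarith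
  set a := β * Int.fract (x / β) with hadef
  set b := β * Int.fract (y / β) with hbdef
  have ha : 0 ≤ a := mul_nonneg hβ.le (Int.fract_nonneg _)
  have hb : 0 ≤ b := mul_nonneg hβ.le (Int.fract_nonneg _)
  have ha' : a < β := by
    have := Int.fract_lt_one (x / β); rw [hadef]; nlinarith
  have hb' : b < β := by
    have := Int.fract_lt_one (y / β); rw [hbdef]; nlinarith
  have hint : (∫ t in (0:ℝ)..β, phi β lam x t * phi β lam y t)
      = ∫ t in (0:ℝ)..β, phi β lam a t * phi β lam b t := by
    apply intervalIntegral.integral_congr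
    intro t _
    unfold phi
    dsimp only
    rw [frac_shift hβ x t, frac_shift hβ y t, ← hadef, ← hbdef]
  have hred : Real.exp (-(β * Int.fract (|x - y| / β)) * lam) +
        Real.exp (-(β - β * Int.fract (|x - y| / β)) * lam)
      = Real.exp (-|a - b| * lam) + Real.exp (-(β - |a - b|) * lam) := by
    rcases le_total y x with h | h
    · apply reduceAux hβ ha ha' hb hb'
      rw [abs_of_nonneg (by linarith)]
      have hfx : Int.fract (x / β) = x / β - ⌊x / β⌋ := rfl
      have hfy : Int.fract (y / β) = y / β - ⌊y / β⌋ := rfl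
      have he : (x - y) / β = (a - b) / β + ((⌊x / β⌋ - ⌊y / β⌋ : ℤ) : ℝ) := by
        rw [hadef, hbdef, hfx, hfy]
        push_cast
        field_simp
        ring
      rw [he, Int.fract_add_intCast]
    · rw [abs_sub_comm x y, abs_sub_comm a b]
      apply reduceAux hβ hb hb' ha ha'
      rw [abs_of_nonneg (by linarith)]
      have hfx : Int.fract (x / β) = x / β - ⌊x / β⌋ := rfl
      have hfy : Int.fract (y / β) = y / β - ⌊y / β⌋ := rfl
      have he : (y - x) / β = (b - a) / β + ((⌊y / β⌋ - ⌊x / β⌋ : ℤ) : ℝ) := by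
        rw [hadef, hbdef, hfx, hfy]
        push_cast
        field_simp
        ring
      rw [he, Int.fract_add_intCast]
  rw [hint, core' hβ hlam ha ha' hb hb', hred]
  have hD' : (1 : ℝ) - Real.exp (-β * lam) ≠ 0 := hD.ne'
  have hl : (2 : ℝ) * lam ≠ 0 := by positivity
  have gen : ∀ S D L : ℝ, D ≠ 0 → L ≠ 0 → L / D ^ 2 * (D * S / L) = S / D := by
    intro S D L h1 h2
    field_simp
  exact (gen _ _ _ hD' hl).symm

end Stmt4Aux

/-- stochastic positivity of the one-mode thermal two-point function:
the matrix `(f(|sᵢ-sⱼ|))` is positive semi-definite, where `f` is the β-periodic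
(even) extension of `s ↦ (e^{-sλ}+e^{-(β-s)λ})/(1-e^{-βλ})` from `[0,β]`. -/
theorem stmt4 (β lam : ℝ) (hβ : 0 < β) (hlam : 0 < lam) :
    let f : ℝ → ℝ := fun s =>
      (Real.exp (-(β * Int.fract (s / β)) * lam) +
        Real.exp (-(β - β * Int.fract (s / β)) * lam)) / (1 - Real.exp (-β * lam))
    ∀ (n : ℕ) (s : Fin n → ℝ) (c : Fin n → ℂ),
      0 ≤ (∑ i, ∑ j, (starRingEnd ℂ) (c i) * c j * ((f |s i - s j| : ℝ) : ℂ)).re := by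
  intro f n s c
  have hD : (0:ℝ) < 1 - Real.exp (-β * lam) := by
    have : Real.exp (-β * lam) < 1 := Real.exp_lt_one_iff.mpr (by nlinarith)
    linarith
  set C : ℝ := 2 * lam / (1 - Real.exp (-β * lam)) ^ 2 with hC
  have hCpos : 0 < C := div_pos (by positivity) (pow_pos hD 2)
  set Φ : Fin n → ℝ → ℝ := fun i t => Stmt4Aux.phi β lam (s i) t with hΦ
  have hf : ∀ u : ℝ, f u = (Real.exp (-(β * Int.fract (u / β)) * lam) +
      Real.exp (-(β - β * Int.fract (u / β)) * lam)) / (1 - Real.exp (-β * lam)) :=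
    fun u => rfl
  have hkern : ∀ i j, f |s i - s j| = C * ∫ t in (0:ℝ)..β, Φ i t * Φ j t := by
    intro i j
    rw [hf, hC]
    simp only [hΦ]
    exact Stmt4Aux.kern hβ hlam (s i) (s j)
  have hint : ∀ i j : Fin n, IntervalIntegrable (fun t => Φ i t * Φ j t) volume 0 β :=
    fun i j => Stmt4Aux.phi_intble hβ hlam (s i) (s j) 0 β
  have hre : ∀ i j, ((starRingEnd ℂ) (c i) * c j * ((f |s i - s j| : ℝ) : ℂ)).re
      = ((starRingEnd ℂ) (c i) * c j).re * (C * ∫ t in (0:ℝ)..β, Φ i t * Φ j t) := by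
    intro i j
    rw [← hkern i j]
    simp [Complex.mul_re]
  have step : ∑ i, ∑ j, ((starRingEnd ℂ) (c i) * c j).re * (C * ∫ t in (0:ℝ)..β, Φ i t * Φ j t)
      = C * ∫ t in (0:ℝ)..β,
          (∑ p ∈ Finset.univ ×ˢ Finset.univ,
            ((starRingEnd ℂ) (c p.1) * c p.2).re * (Φ p.1 t * Φ p.2 t)) := by
    rw [← Finset.sum_product']
    have e1 : ∀ p : Fin n × Fin n,
        ((starRingEnd ℂ) (c p.1) * c p.2).re * (C * ∫ t in (0:ℝ)..β, Φ p.1 t * Φ p.2 t)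
        = C * ∫ t in (0:ℝ)..β,
            ((starRingEnd ℂ) (c p.1) * c p.2).re * (Φ p.1 t * Φ p.2 t) := by
      intro p
      rw [intervalIntegral.integral_const_mul]
      ring
    rw [Finset.sum_congr rfl (fun p _ => e1 p), ← Finset.mul_sum]
    congr 1
    rw [← intervalIntegral.integral_finset_sum
      (fun p (_ : p ∈ Finset.univ ×ˢ Finset.univ) => (hint p.1 p.2).const_mul _)]
  have hpt : ∀ t : ℝ, ∑ i, ∑ j, ((starRingEnd ℂ) (c i) * c j).re * (Φ i t * Φ j t)
      = Complex.normSq (∑ i, c i * ((Φ i t : ℝ) : ℂ)) := by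
    intro t
    have hz : ((starRingEnd ℂ) (∑ i, c i * ((Φ i t : ℝ) : ℂ)) * ∑ i, c i * ((Φ i t : ℝ) : ℂ)).re
        = Complex.normSq (∑ i, c i * ((Φ i t : ℝ) : ℂ)) := by
      rw [mul_comm, Complex.mul_conj, Complex.ofReal_re]
    rw [← hz, map_sum, Finset.sum_mul_sum, Complex.re_sum]
    apply Finset.sum_congr rfl
    intro i _
    rw [Complex.re_sum]
    apply Finset.sum_congr rfl
    intro j _
    rw [map_mul, Complex.conj_ofReal]
    have he : (starRingEnd ℂ) (c i) * ((Φ i t : ℝ) : ℂ) * (c j * ((Φ j t : ℝ) : ℂ))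
        = ((starRingEnd ℂ) (c i) * c j) * (((Φ i t * Φ j t : ℝ)) : ℂ) := by
      push_cast
      ring
    rw [he]
    simp only [Complex.mul_re, Complex.ofReal_re, Complex.ofReal_im, mul_zero, sub_zero]
  rw [Complex.re_sum]
  simp only [Complex.re_sum]
  simp only [hre]
  rw [step]
  apply mul_nonneg hCpos.le
  apply intervalIntegral.integral_nonneg hβ.le
  intro t _
  rw [Finset.sum_product]
  dsimp only
  rw [hpt t]
  exact Complex.normSq_nonneg _
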